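/- Let n ≥ 1, let f_{ij} : ℝⁿ → ℝ (1 ≤ i, j ≤ n) be functions with f_{ij} = f_{ji}, let g₁, …, g_n : ℝⁿ → ℝ be C¹, and let k : ℝⁿ → ℝ be a function such that ∂_{p^j} g_i + ∂_{p^i} g_j = 2 k f_{ij} holds on ℝⁿ for all i, j. Then for every open Ω ⊆ ℝⁿ and every C² function u : Ω → ℝ satisfying Σ_{i,j} f_{ij}(∇u) u_{x_i x_j} = 0 on Ω, the conservation law Σ_i ∂_{x_i} ( g_i(∇u) ) = 0 holds on Ω. -/

import Mathlib

open scoped Topology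

/-- Partial derivative of `f : ℝⁿ → ℝ` in the `i`-th coordinate direction. -/
noncomputable def pd {n : ℕ} (i : Fin n) (f : (Fin n → ℝ) → ℝ) (x : Fin n → ℝ) : ℝ :=
  fderiv ℝ f x (Pi.single i 1)

lemma clm_apply_eq_sum {n : ℕ} (T : (Fin n → ℝ) →L[ℝ] ℝ) (v : Fin n → ℝ) :
    T v = ∑ l, v l * T (Pi.single l 1) := by
  have hv : v = ∑ l, v l • (Pi.single l 1 : Fin n → ℝ) := by
    refine (Finset.univ_sum_single v).symm.trans ?_
    refine Finset.sum_congr rfl fun l _ => ?_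
    rw [← Pi.single_smul, smul_eq_mul, mul_one]
  conv_lhs => rw [hv]
  rw [map_sum]
  exact Finset.sum_congr rfl fun l _ => by rw [map_smul, smul_eq_mul]


/-- If `∂_{pʲ} gᵢ + ∂_{pⁱ} gⱼ = 2 k f_{ij}` for some integrating factor `k`, then
`Σᵢ ∂_{xᵢ}(gᵢ(∇u)) = 0` holds for every solution of `Σ f_{ij}(∇u) u_{xᵢxⱼ} = 0`. -/
theorem conservation_law_of_integrating_factor
    {n : ℕ} (hn : 1 ≤ n)
    (f : Fin n → Fin n → (Fin n → ℝ) → ℝ)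
    (hfsym : ∀ i j, f i j = f j i)
    (g : Fin n → (Fin n → ℝ) → ℝ)
    (hg : ∀ i, ContDiff ℝ 1 (g i))
    (k : (Fin n → ℝ) → ℝ)
    (hrel : ∀ i j : Fin n, ∀ p : Fin n → ℝ,
      pd j (g i) p + pd i (g j) p = 2 * k p * f i j p) :
    ∀ (Ω : Set (Fin n → ℝ)), IsOpen Ω →
      ∀ u : (Fin n → ℝ) → ℝ, ContDiffOn ℝ 2 u Ω →
        (∀ x ∈ Ω, ∑ i, ∑ j, f i j (fun l => pd l u x) * pd i (pd j u) x = 0) →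
        ∀ x ∈ Ω, ∑ i, pd i (fun y => g i (fun l => pd l u y)) x = 0 := by
  intro Ω hΩ u hu hsol x hx
  have hmem : Ω ∈ 𝓝 x := hΩ.mem_nhds hx
  set p : Fin n → ℝ := fun l => pd l u x with hp
  -- fderiv u is C¹ on Ω
  have hfd : ContDiffOn ℝ 1 (fun y => fderiv ℝ u y) Ω :=
    hu.fderiv_of_isOpen hΩ (by norm_num)
  have hfdx : DifferentiableAt ℝ (fun y => fderiv ℝ u y) x :=
    (hfd.contDiffAt hmem).differentiableAt one_ne_zero
  set f'' := fderiv ℝ (fun y => fderiv ℝ u y) x with hf''def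
  have hcomp : ∀ l : Fin n, HasFDerivAt (fun y => fderiv ℝ u y (Pi.single l 1))
      ((ContinuousLinearMap.apply ℝ ℝ ((Pi.single l 1 : Fin n → ℝ))).comp f'') x := by
    intro l
    exact ((ContinuousLinearMap.apply ℝ ℝ ((Pi.single l 1 : Fin n → ℝ))).hasFDerivAt).comp x
      hfdx.hasFDerivAt
  have hpd2 : ∀ i l : Fin n, pd i (pd l u) x = f'' (Pi.single i 1) (Pi.single l 1) := by
    intro i l
    have h := (hcomp l).fderiv
    show fderiv ℝ (fun y => fderiv ℝ u y (Pi.single l 1)) x (Pi.single i 1)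
      = f'' (Pi.single i 1) (Pi.single l 1)
    rw [h]
    rfl
  have hsymm : ∀ v w, f'' v w = f'' w v := by
    intro v w
    have hev : ∀ᶠ y in 𝓝 x, HasFDerivAt u (fderiv ℝ u y) y := by
      filter_upwards [hmem] with y hy
      exact ((hu.contDiffAt (hΩ.mem_nhds hy)).differentiableAt (by norm_num)).hasFDerivAt
    exact second_derivative_symmetric_of_eventually hev hfdx.hasFDerivAt v w
  have hbsymm : ∀ i l : Fin n, pd i (pd l u) x = pd l (pd i u) x := by
    intro i l
    rw [hpd2 i l, hpd2 l i, hsymm]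
  -- differentiability of the gradient map G
  have hGl : ∀ l : Fin n, DifferentiableAt ℝ (fun y => pd l u y) x :=
    fun l => (hcomp l).differentiableAt
  have hG : DifferentiableAt ℝ (fun y l => pd l u y) x := differentiableAt_pi.2 hGl
  have hfderivG : fderiv ℝ (fun y l => pd l u y) x
      = ContinuousLinearMap.pi (fun l => fderiv ℝ (fun y => pd l u y) x) := fderiv_pi hGl
  -- chain rule
  have hstep : ∀ i : Fin n, pd i (fun y => g i (fun l => pd l u y)) x
      = ∑ l, pd l (g i) p * pd i (pd l u) x := by
    intro i
    have hgd : DifferentiableAt ℝ (g i) p :=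
      ((hg i).contDiffAt).differentiableAt (by norm_num)
    have hc : fderiv ℝ ((g i) ∘ (fun y l => pd l u y)) x
        = (fderiv ℝ (g i) p).comp (fderiv ℝ (fun y l => pd l u y) x) :=
      fderiv_comp x hgd hG
    have h1 : pd i (fun y => g i (fun l => pd l u y)) x
        = fderiv ℝ (g i) p (fderiv ℝ (fun y l => pd l u y) x (Pi.single i 1)) := by
      show fderiv ℝ ((g i) ∘ (fun y l => pd l u y)) x (Pi.single i 1) = _
      rw [hc]; rfl
    have h2 : fderiv ℝ (fun y l => pd l u y) x (Pi.single i 1)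
        = fun l => pd i (pd l u) x := by
      rw [hfderivG]
      funext l
      simp only [ContinuousLinearMap.pi_apply]
      rfl
    rw [h1, h2, clm_apply_eq_sum]
    exact Finset.sum_congr rfl fun l _ => mul_comm _ _
  -- final algebra
  have key : ∑ i, ∑ j, f i j p * pd i (pd j u) x = 0 := hsol x hx
  have hS : ∑ i, ∑ l, pd l (g i) p * pd i (pd l u) x
      = ∑ i, ∑ l, pd i (g l) p * pd i (pd l u) x := by
    rw [Finset.sum_comm]
    refine Finset.sum_congr rfl fun i _ => Finset.sum_congr rfl fun l _ => ?_
    rw [hbsymm]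
  have h2S : (2:ℝ) * (∑ i, ∑ l, pd l (g i) p * pd i (pd l u) x)
      = 2 * k p * ∑ i, ∑ l, f i l p * pd i (pd l u) x := by
    rw [two_mul]
    nth_rewrite 2 [hS]
    rw [← Finset.sum_add_distrib, Finset.mul_sum]
    refine Finset.sum_congr rfl fun i _ => ?_
    rw [← Finset.sum_add_distrib, Finset.mul_sum]
    refine Finset.sum_congr rfl fun l _ => ?_
    rw [← add_mul, hrel i l p]
    ring
  rw [key, mul_zero] at h2S
  have hS0 : ∑ i, ∑ l, pd l (g i) p * pd i (pd l u) x = 0 := by linarith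
  calc ∑ i, pd i (fun y => g i (fun l => pd l u y)) x
      = ∑ i, ∑ l, pd l (g i) p * pd i (pd l u) x :=
        Finset.sum_congr rfl fun i _ => hstep i
    _ = 0 := hS0
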